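/- (Chevalley–Warning coefficient form) Let q = p^n with p an odd prime and let F be a polynomial over F_q in N variables of total degree at most 2N. Then (−1)^N times the sum over α ∈ F_q^N of the Legendre symbol (F(α)/q) is congruent modulo p to the coefficient of the monomial (α_1 ⋯ α_N)^{q−1} in F^{(q−1)/2}. -/

import Mathlib

/-- The Legendre symbol on a finite field: the number of square roots of `a` minus 1. -/
noncomputable def leg (F : Type*) [Field F] (a : F) : ℤ :=
  (Nat.card {x : F // x ^ 2 = a} : ℤ) - 1

open MvPolynomial Finset

lemma leg_eq_quadraticChar {K : Type*} [Field K] [Fintype K] [DecidableEq K]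
    (hK : ringChar K ≠ 2) (a : K) : leg K a = quadraticChar K a := by
  have h := quadraticChar_card_sqrts hK a
  have hc : Nat.card {x : K // x ^ 2 = a} = ({x : K | x ^ 2 = a}.toFinset).card := by
    rw [Set.toFinset_card]
    exact Nat.card_eq_fintype_card
  unfold leg
  rw [hc, h]
  ring

lemma leg_cast {K : Type*} [Field K] [Fintype K] (hK : ringChar K ≠ 2) (a : K) :
    ((leg K a : ℤ) : K) = a ^ (Fintype.card K / 2) := by
  classical
  rw [leg_eq_quadraticChar hK a]
  exact quadraticChar_eq_pow_of_char_ne_two' hK a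

lemma sum_pow_card_sub_one_eq_neg_one (K : Type*) [Field K] [Fintype K] :
    ∑ x : K, x ^ (Fintype.card K - 1) = -1 := by
  classical
  have h0 : (Fintype.card K : K) = 0 := FiniteField.cast_card_eq_zero K
  have h1 : 1 ≤ Fintype.card K := Fintype.card_pos
  calc ∑ x : K, x ^ (Fintype.card K - 1)
      = ∑ x : K, if x = 0 then 0 else 1 := by
        refine Finset.sum_congr rfl fun x _ => ?_
        by_cases hx : x = 0
        · simp [hx, zero_pow (Nat.sub_ne_zero_of_lt Fintype.one_lt_card)]
        · simp [hx, FiniteField.pow_card_sub_one_eq_one x hx]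
    _ = ((Finset.univ.filter fun x : K => ¬ x = 0).card : K) := by
        rw [Finset.sum_ite, Finset.sum_const, Finset.sum_const]
        simp
    _ = ((Fintype.card K - 1 : ℕ) : K) := by
        congr 1
        rw [Finset.filter_not, Finset.card_sdiff_of_subset (by simp)]
        have h2 : (Finset.univ.filter fun x : K => x = 0).card = 1 := by
          have h3 : (Finset.univ.filter fun x : K => x = 0) = {0} := by
            ext x; simp
          rw [h3, Finset.card_singleton]
        rw [h2, Finset.card_univ]
    _ = -1 := by
        rw [Nat.cast_sub h1, h0]
        simp

lemma sum_eval_eq_coeff {K : Type*} [Field K] [Fintype K] (N : ℕ)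
    (G : MvPolynomial (Fin N) K)
    (h : G.totalDegree ≤ N * (Fintype.card K - 1)) :
    ∑ x : Fin N → K, MvPolynomial.eval x G =
      (-1) ^ N * MvPolynomial.coeff
        (Finsupp.equivFunOnFinite.symm fun _ : Fin N => Fintype.card K - 1) G := by
  classical
  set q := Fintype.card K with hq
  set w : (Fin N) →₀ ℕ := Finsupp.equivFunOnFinite.symm fun _ : Fin N => q - 1 with hw
  have hwapp : ∀ i, w i = q - 1 := fun i => rfl
  calc ∑ x : Fin N → K, eval x G
      = ∑ x : Fin N → K, ∑ d ∈ G.support, G.coeff d * ∏ i, x i ^ d i := by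
        simp only [eval_eq']
    _ = ∑ d ∈ G.support, ∑ x : Fin N → K, G.coeff d * ∏ i, x i ^ d i := Finset.sum_comm
    _ = ∑ d ∈ G.support, G.coeff d * ∏ i, ∑ a : K, a ^ d i := by
        refine Finset.sum_congr rfl fun d _ => ?_
        rw [← Finset.mul_sum]
        congr 1
        exact (Fintype.prod_sum fun i (a : K) => a ^ d i).symm
    _ = G.coeff w * ∏ i : Fin N, ∑ a : K, a ^ w i := by
        apply Finset.sum_eq_single
        · intro d hd hne
          have hex : ∃ i, d i < q - 1 := by
            by_contra hc
            push_neg at hc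
            obtain ⟨j, hj⟩ : ∃ j, d j ≠ q - 1 := by
              by_contra hall
              push_neg at hall
              exact hne (Finsupp.ext fun i => (hall i).trans (hwapp i).symm)
            have hjlt : q - 1 < d j := lt_of_le_of_ne (hc j) (Ne.symm hj)
            have hsum : ∑ i : Fin N, d i ≤ G.totalDegree := by
              have := MvPolynomial.le_totalDegree hd
              rwa [Finsupp.sum_fintype _ _ (fun _ => rfl)] at this
            have hlt : N * (q - 1) < ∑ i : Fin N, d i := by
              calc N * (q - 1) = ∑ _i : Fin N, (q - 1) := by
                    simp [Finset.sum_const, mul_comm]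
                _ < ∑ i : Fin N, d i :=
                    Finset.sum_lt_sum (fun i _ => hc i) ⟨j, Finset.mem_univ j, hjlt⟩
            omega
          obtain ⟨i, hi⟩ := hex
          have hz : ∏ i : Fin N, ∑ a : K, a ^ d i = 0 :=
            Finset.prod_eq_zero (Finset.mem_univ i)
              (FiniteField.sum_pow_lt_card_sub_one K _ hi)
          rw [hz, mul_zero]
        · intro hw'
          rw [MvPolynomial.notMem_support_iff.mp hw', zero_mul]
    _ = (-1) ^ N * G.coeff w := by
        have : ∏ i : Fin N, ∑ a : K, a ^ w i = (-1) ^ N := by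
          simp only [hwapp]
          rw [sum_pow_card_sub_one_eq_neg_one K]
          simp
        rw [this, mul_comm]

theorem chevalley_warning_coefficient_form (K : Type*) [Field K] [Fintype K]
    (p n : ℕ) (hp : p.Prime) (hodd : Odd p) (hcard : Fintype.card K = p ^ n)
    (N : ℕ) (F : MvPolynomial (Fin N) K) (hdeg : F.totalDegree ≤ 2 * N) :
    (((-1 : ℤ) ^ N * ∑ α : Fin N → K, leg K (MvPolynomial.eval α F) : ℤ) : K) =
      MvPolynomial.coeff
        (Finsupp.equivFunOnFinite.symm fun _ : Fin N => Fintype.card K - 1)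
        (F ^ ((Fintype.card K - 1) / 2)) := by
  classical
  set q := Fintype.card K with hq
  have hq2 : 2 ≤ q := Fintype.one_lt_card
  have hqodd : Odd q := by
    rw [hcard]
    exact hodd.pow
  have hchar : ringChar K ≠ 2 := by
    intro h2
    have hdvd : (ringChar K) ∣ q := by
      have := FiniteField.cast_card_eq_zero K
      exact (CharP.cast_eq_zero_iff K (ringChar K) q).mp this
    rw [h2, hcard] at hdvd
    have : (2 : ℕ) ∣ p := (Nat.Prime.prime Nat.prime_two).dvd_of_dvd_pow hdvd
    obtain ⟨k, hk⟩ := hodd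
    omega
  have hhalf : q / 2 = (q - 1) / 2 := by
    obtain ⟨k, hk⟩ := hqodd
    omega
  have hdeg2 : (F ^ ((q - 1) / 2)).totalDegree ≤ N * (q - 1) := by
    calc (F ^ ((q - 1) / 2)).totalDegree ≤ ((q - 1) / 2) * F.totalDegree :=
          MvPolynomial.totalDegree_pow _ _
      _ ≤ ((q - 1) / 2) * (2 * N) := Nat.mul_le_mul_left _ hdeg
      _ = N * (q - 1) := by
          obtain ⟨k, hk⟩ := hqodd
          have h1 : (q - 1) / 2 = k := by omega
          have h2 : q - 1 = 2 * k := by omega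
          rw [h1, h2]
          ring
  have key := sum_eval_eq_coeff N (F ^ ((q - 1) / 2)) hdeg2
  have hcast : ∀ α : Fin N → K,
      ((leg K (MvPolynomial.eval α F) : ℤ) : K) = MvPolynomial.eval α (F ^ ((q - 1) / 2)) := by
    intro α
    rw [leg_cast hchar, map_pow, hhalf]
  push_cast
  rw [Finset.sum_congr rfl fun α _ => hcast α, key, ← mul_assoc, ← mul_pow]
  simp
  rfl
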